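/- arXiv:1711.08068 — 2 statements merged into one kernel-verified Lean document; each statement's English description precedes it below -/
import Mathlib

section
/- Under the stated Lipschitz and variance assumptions, the deviation between trajectories satisfies the one-step bound ‖x_{t+1} − x̃_{t+1}‖ ≤ ρ(ρ'+1)‖x_t − x̃_t‖ + ρ√M. -/
open MeasureTheory

lemma integral_le_sqrt_of_sq_integral_le
    {α : Type*} [MeasurableSpace α] (μ : Measure α) [IsProbabilityMeasure μ]
    (g : α → ℝ) (hg : ∀ a, 0 ≤ g a) (hg2 : Integrable (fun a => g a ^ 2) μ)
    (M : ℝ) (hM : 0 ≤ M) (h : ∫ a, g a ^ 2 ∂μ ≤ M) :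
    ∫ a, g a ∂μ ≤ Real.sqrt M := by
  have hmeas : AEStronglyMeasurable g μ := by
    have := (Real.continuous_sqrt.comp_aestronglyMeasurable hg2.1)
    refine this.congr (Filter.Eventually.of_forall fun a => ?_)
    simp [Real.sqrt_sq (hg a)]
  have hgi : Integrable g μ := by
    refine (hg2.add (integrable_const 1)).mono' hmeas
      (Filter.Eventually.of_forall fun a => ?_)
    simp only [Pi.add_apply, Real.norm_eq_abs, abs_of_nonneg (hg a)]
    nlinarith [hg a, sq_nonneg (g a - 1)]
  set m := ∫ a, g a ∂μ with hm
  have hm0 : 0 ≤ m := integral_nonneg hg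
  have hkey : m ^ 2 ≤ ∫ a, g a ^ 2 ∂μ := by
    have h0 : 0 ≤ ∫ a, (g a - m) ^ 2 ∂μ :=
      integral_nonneg fun a => sq_nonneg _
    have hexp : ∀ a, (g a - m) ^ 2 = g a ^ 2 - (2 * m) * g a + m ^ 2 := by
      intro a; ring
    simp_rw [hexp] at h0
    have hI1 : Integrable (fun a => g a ^ 2 - 2 * m * g a) μ :=
      hg2.sub (hgi.const_mul (2 * m))
    rw [integral_add hI1 (integrable_const (m ^ 2)),
      integral_sub hg2 (hgi.const_mul (2 * m)), integral_const_mul, integral_const] at h0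
    simp only [measure_univ, ENNReal.toReal_one, probReal_univ, smul_eq_mul, one_mul] at h0
    nlinarith [h0]
  have : m ^ 2 ≤ M := hkey.trans h
  calc m = Real.sqrt (m ^ 2) := (Real.sqrt_sq hm0).symm
    _ ≤ Real.sqrt M := Real.sqrt_le_sqrt this

/-- One-step deviation bound: ‖x_{t+1} − x̃_{t+1}‖ ≤ ρ(ρ'+1)‖x_t − x̃_t‖ + ρ√M. -/
theorem one_step_deviation_bound
    {n d : ℕ} [MeasurableSpace (EuclideanSpace ℝ (Fin d))] [BorelSpace (EuclideanSpace ℝ (Fin d))]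
    (f : EuclideanSpace ℝ (Fin n) → EuclideanSpace ℝ (Fin d) → EuclideanSpace ℝ (Fin n))
    (π : EuclideanSpace ℝ (Fin n) → EuclideanSpace ℝ (Fin d))
    (μ : EuclideanSpace ℝ (Fin n) → Measure (EuclideanSpace ℝ (Fin d)))
    [∀ x, IsProbabilityMeasure (μ x)]
    (ρ ρ' M : ℝ) (hρ : 0 ≤ ρ) (hρ' : 0 ≤ ρ') (hM : 0 ≤ M)
    (hf : ∀ x y a b, ‖f x a - f y b‖ ≤ ρ * (‖x - y‖ + ‖a - b‖))
    (hπ : ∀ x y, ‖π x - π y‖ ≤ ρ' * ‖x - y‖)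
    (hmean : ∀ x, ∫ a, a ∂(μ x) = π x)
    (hvar : ∀ x, ∫ a, ‖a - π x‖ ^ 2 ∂(μ x) ≤ M)
    (hint : ∀ x, Integrable (fun a => f x a) (μ x))
    (hint_id : ∀ x, Integrable (fun a : EuclideanSpace ℝ (Fin d) => a) (μ x))
    (hint_sq : ∀ x, Integrable (fun a => ‖a - π x‖ ^ 2) (μ x))
    (xt xtil : EuclideanSpace ℝ (Fin n)) :
    ‖f xt (π xt) - ∫ a, f xtil a ∂(μ xtil)‖ ≤
      ρ * (ρ' + 1) * ‖xt - xtil‖ + ρ * Real.sqrt M := by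
  set ν := μ xtil
  -- integrability of a ↦ ‖a - π xtil‖
  have hg2 : Integrable (fun a => ‖a - π xtil‖ ^ 2) ν := hint_sq xtil
  have hmeas : AEStronglyMeasurable (fun a => ‖a - π xtil‖) ν := by
    have := (Real.continuous_sqrt.comp_aestronglyMeasurable hg2.1)
    refine this.congr (Filter.Eventually.of_forall fun a => ?_)
    simp [Real.sqrt_sq (norm_nonneg _)]
  have hgi : Integrable (fun a => ‖a - π xtil‖) ν := by
    refine (hg2.add (integrable_const 1)).mono' hmeas
      (Filter.Eventually.of_forall fun a => ?_)
    simp only [Pi.add_apply, Real.norm_eq_abs, abs_of_nonneg (norm_nonneg _)]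
    nlinarith [norm_nonneg (a - π xtil), sq_nonneg (‖a - π xtil‖ - 1)]
  have hgsqrt : ∫ a, ‖a - π xtil‖ ∂ν ≤ Real.sqrt M :=
    integral_le_sqrt_of_sq_integral_le ν _ (fun a => norm_nonneg _) hg2 M hM (hvar xtil)
  -- the dominating function
  have hdom : Integrable
      (fun a => ρ * (‖xt - xtil‖ + (‖π xt - π xtil‖ + ‖a - π xtil‖))) ν := by
    have hIa : Integrable (fun a => ‖π xt - π xtil‖ + ‖a - π xtil‖) ν :=
      (integrable_const _).add hgi
    have : Integrable (fun a => ‖xt - xtil‖ + (‖π xt - π xtil‖ + ‖a - π xtil‖)) ν :=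
      (integrable_const _).add hIa
    exact this.const_mul _
  have h1 : ‖f xt (π xt) - ∫ a, f xtil a ∂ν‖ =
      ‖∫ a, (f xt (π xt) - f xtil a) ∂ν‖ := by
    rw [integral_sub (integrable_const _) (hint xtil), integral_const]
    simp [measure_univ]
    rfl
  rw [h1]
  have h2 : ‖∫ a, (f xt (π xt) - f xtil a) ∂ν‖ ≤
      ∫ a, ρ * (‖xt - xtil‖ + (‖π xt - π xtil‖ + ‖a - π xtil‖)) ∂ν := by
    refine norm_integral_le_of_norm_le hdom (Filter.Eventually.of_forall fun a => ?_)
    calc ‖f xt (π xt) - f xtil a‖ ≤ ρ * (‖xt - xtil‖ + ‖π xt - a‖) := hf _ _ _ _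
      _ ≤ ρ * (‖xt - xtil‖ + (‖π xt - π xtil‖ + ‖a - π xtil‖)) := by
          have : ‖π xt - a‖ ≤ ‖π xt - π xtil‖ + ‖a - π xtil‖ := by
            have := norm_sub_le_norm_sub_add_norm_sub (π xt) (π xtil) a
            calc ‖π xt - a‖ = ‖π xt - π xtil + (π xtil - a)‖ := by abel_nf
              _ ≤ ‖π xt - π xtil‖ + ‖π xtil - a‖ := norm_add_le _ _
              _ = ‖π xt - π xtil‖ + ‖a - π xtil‖ := by rw [norm_sub_rev (π xtil) a]
          nlinarith [hρ]
  refine h2.trans ?_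
  have hIa : Integrable (fun a => ‖π xt - π xtil‖ + ‖a - π xtil‖) ν :=
    (integrable_const _).add hgi
  rw [integral_const_mul,
    integral_add (integrable_const ‖xt - xtil‖) hIa,
    integral_add (integrable_const ‖π xt - π xtil‖) hgi, integral_const, integral_const]
  simp only [measure_univ, ENNReal.toReal_one, probReal_univ, smul_eq_mul, one_mul]
  have hπb : ‖π xt - π xtil‖ ≤ ρ' * ‖xt - xtil‖ := hπ xt xtil
  nlinarith [hgsqrt, hρ, norm_nonneg (xt - xtil)]
end

section
/- Under the assumptions of the approximation bound, if α := ρ(ρ'+1) < 1 and x_0 = x̃_0, then for every horizon T, ‖x_T − x̃_T‖ ≤ (1 − α^T)/(1 − α) · √M · ρ ≤ √M/(1−α) · ρ. -/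
open MeasureTheory

lemma mean_le_sqrt_sq {E : Type*} [MeasurableSpace E] (μ : Measure E) [IsProbabilityMeasure μ]
    (g : E → ℝ) (hg0 : ∀ a, 0 ≤ g a) (hg : Integrable g μ)
    (hg2 : Integrable (fun a => g a ^ 2) μ) :
    ∫ a, g a ∂μ ≤ Real.sqrt (∫ a, g a ^ 2 ∂μ) := by
  set c := ∫ a, g a ∂μ with hc
  have hc0 : 0 ≤ c := integral_nonneg hg0
  have key : c ^ 2 ≤ ∫ a, g a ^ 2 ∂μ := by
    have h0 : 0 ≤ ∫ a, (g a - c) ^ 2 ∂μ := integral_nonneg fun a => sq_nonneg _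
    have hexp : ∫ a, (g a - c) ^ 2 ∂μ = (∫ a, g a ^ 2 ∂μ) - c ^ 2 := by
      have : (fun a => (g a - c) ^ 2) = fun a => g a ^ 2 - 2 * c * g a + c ^ 2 := by
        ext a; ring
      rw [this, integral_add (by exact (hg2.sub (hg.const_mul _))) (integrable_const _),
        integral_sub hg2 (hg.const_mul _), integral_const_mul, integral_const]
      simp [← hc]
      ring
    linarith [hexp ▸ h0]
  calc c = Real.sqrt (c ^ 2) := by rw [Real.sqrt_sq hc0]
    _ ≤ _ := Real.sqrt_le_sqrt key

/-- Trajectory deviation bound: under α = ρ(ρ'+1) < 1, for every horizon T,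
‖x_T − x̃_T‖ ≤ (1 − α^T)/(1 − α) · √M · ρ ≤ √M/(1−α) · ρ. -/
theorem trajectory_deviation_bound
    {n d : ℕ} [MeasurableSpace (EuclideanSpace ℝ (Fin d))] [BorelSpace (EuclideanSpace ℝ (Fin d))]
    (f : EuclideanSpace ℝ (Fin n) → EuclideanSpace ℝ (Fin d) → EuclideanSpace ℝ (Fin n))
    (π : EuclideanSpace ℝ (Fin n) → EuclideanSpace ℝ (Fin d))
    (μ : EuclideanSpace ℝ (Fin n) → Measure (EuclideanSpace ℝ (Fin d)))
    [∀ x, IsProbabilityMeasure (μ x)]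
    (ρ ρ' M : ℝ) (hρ : 0 ≤ ρ) (hρ' : 0 ≤ ρ') (hM : 0 ≤ M)
    (hα : ρ * (ρ' + 1) < 1)
    (hf : ∀ x y a b, ‖f x a - f y b‖ ≤ ρ * (‖x - y‖ + ‖a - b‖))
    (hπ : ∀ x y, ‖π x - π y‖ ≤ ρ' * ‖x - y‖)
    (hmean : ∀ x, ∫ a, a ∂(μ x) = π x)
    (hvar : ∀ x, ∫ a, ‖a - π x‖ ^ 2 ∂(μ x) ≤ M)
    (hint : ∀ x, Integrable (fun a => f x a) (μ x))
    (hint_id : ∀ x, Integrable (fun a : EuclideanSpace ℝ (Fin d) => a) (μ x))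
    (hint_sq : ∀ x, Integrable (fun a => ‖a - π x‖ ^ 2) (μ x))
    (x xtil : ℕ → EuclideanSpace ℝ (Fin n))
    (h0 : x 0 = xtil 0)
    (hx : ∀ t, x (t + 1) = f (x t) (π (x t)))
    (hxtil : ∀ t, xtil (t + 1) = ∫ a, f (xtil t) a ∂(μ (xtil t))) :
    ∀ T : ℕ,
      ‖x T - xtil T‖ ≤ (1 - (ρ * (ρ' + 1)) ^ T) / (1 - ρ * (ρ' + 1)) * Real.sqrt M * ρ ∧
      (1 - (ρ * (ρ' + 1)) ^ T) / (1 - ρ * (ρ' + 1)) * Real.sqrt M * ρ ≤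
        Real.sqrt M / (1 - ρ * (ρ' + 1)) * ρ := by
  set α := ρ * (ρ' + 1) with hαdef
  have hα0 : 0 ≤ α := mul_nonneg hρ (by linarith)
  have h1α : 0 < 1 - α := by linarith
  have hsM : 0 ≤ Real.sqrt M := Real.sqrt_nonneg M
  -- one-step bound
  have hstep : ∀ t, ‖x (t + 1) - xtil (t + 1)‖ ≤ α * ‖x t - xtil t‖ + Real.sqrt M * ρ := by
    intro t
    set X := x t
    set Y := xtil t
    have hintY : Integrable (fun a => ‖a - π Y‖) (μ Y) :=
      ((hint_id Y).sub (integrable_const _)).norm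
    have hmeanle : ∫ a, ‖a - π Y‖ ∂(μ Y) ≤ Real.sqrt M := by
      calc ∫ a, ‖a - π Y‖ ∂(μ Y) ≤ Real.sqrt (∫ a, ‖a - π Y‖ ^ 2 ∂(μ Y)) :=
            mean_le_sqrt_sq (μ Y) _ (fun a => norm_nonneg _) hintY (hint_sq Y)
        _ ≤ Real.sqrt M := Real.sqrt_le_sqrt (hvar Y)
    rw [hx t, hxtil t]
    calc ‖f X (π X) - ∫ a, f Y a ∂(μ Y)‖
        = ‖∫ a, (f X (π X) - f Y a) ∂(μ Y)‖ := by
          rw [integral_sub (integrable_const _) (hint Y), integral_const]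
          simp
      _ ≤ ∫ a, ‖f X (π X) - f Y a‖ ∂(μ Y) := norm_integral_le_integral_norm _
      _ ≤ ∫ a, (α * ‖X - Y‖ + ρ * ‖a - π Y‖) ∂(μ Y) := by
          apply integral_mono (((integrable_const _).sub (hint Y)).norm)
            ((integrable_const _).add (hintY.const_mul ρ))
          intro a
          have h1 := hf X Y (π X) a
          have h2 := hπ X Y
          have h3 : ‖π X - a‖ ≤ ‖π X - π Y‖ + ‖π Y - a‖ := norm_sub_le_norm_sub_add_norm_sub _ _ _
          have h4 : ‖π Y - a‖ = ‖a - π Y‖ := norm_sub_rev _ _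
          simp only [hαdef, Pi.sub_apply, Pi.add_apply]
          have h5 : ‖π X - a‖ ≤ ρ' * ‖X - Y‖ + ‖a - π Y‖ := by rw [h4] at h3; linarith
          have h6 : ρ * (‖X - Y‖ + ‖π X - a‖) ≤
              ρ * (‖X - Y‖ + (ρ' * ‖X - Y‖ + ‖a - π Y‖)) :=
            mul_le_mul_of_nonneg_left (by linarith) hρ
          have h7 : ρ * (‖X - Y‖ + (ρ' * ‖X - Y‖ + ‖a - π Y‖)) =
              ρ * (ρ' + 1) * ‖X - Y‖ + ρ * ‖a - π Y‖ := by ring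
          linarith
      _ = α * ‖X - Y‖ + ρ * ∫ a, ‖a - π Y‖ ∂(μ Y) := by
          rw [integral_add (integrable_const _) (hintY.const_mul ρ), integral_const,
            integral_const_mul]
          simp
      _ ≤ α * ‖X - Y‖ + Real.sqrt M * ρ := by
          have := mul_le_mul_of_nonneg_left hmeanle hρ
          linarith
  -- second part holds generically
  have hsec : ∀ T : ℕ, (1 - α ^ T) / (1 - α) * Real.sqrt M * ρ ≤ Real.sqrt M / (1 - α) * ρ := by
    intro T
    have hp := pow_nonneg hα0 T
    have h1 : (1 - α ^ T) / (1 - α) ≤ 1 / (1 - α) := by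
      gcongr
      all_goals linarith
    have h2 : Real.sqrt M / (1 - α) * ρ = 1 / (1 - α) * Real.sqrt M * ρ := by ring
    rw [h2]
    exact mul_le_mul_of_nonneg_right (mul_le_mul_of_nonneg_right h1 hsM) hρ
  intro T
  induction T with
  | zero =>
      constructor
      · simp [h0]
      · exact hsec 0
  | succ T ih =>
      refine ⟨?_, hsec (T + 1)⟩
      have hS : (1 - α ^ (T + 1)) / (1 - α) = α * ((1 - α ^ T) / (1 - α)) + 1 := by
        field_simp
        ring
      calc ‖x (T + 1) - xtil (T + 1)‖ ≤ α * ‖x T - xtil T‖ + Real.sqrt M * ρ := hstep T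
        _ ≤ α * ((1 - α ^ T) / (1 - α) * Real.sqrt M * ρ) + Real.sqrt M * ρ := by
            have := mul_le_mul_of_nonneg_left ih.1 hα0
            linarith
        _ = (1 - α ^ (T + 1)) / (1 - α) * Real.sqrt M * ρ := by rw [hS]; ring
end
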